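/- Degenerate U-process symmetrization: for a class H of symmetric bounded measurable functions on Z² and i.i.d. Z₁,…,Zₙ with independent copy Z′₁,…,Z′ₙ and independent Rademacher sequence ε, E sup_{h∈H} (1/(n(n−1))) Σ_{i≠j} [h(Z_i,Z_j) − h̃(Z_i) − h̃(Z_j) + E h(Z_i,Z_j)] ≤ E E_ε sup_{h∈H} (1/(n(n−1))) Σ_{i≠j} ε_i ε_j [h(Z_i,Z_j) − h(Z′_i,Z_j) − h(Z_i,Z′_j) + h(Z′_i,Z′_j)], where h̃(z) = E h(z, Z). -/

import Mathlib

open MeasureTheory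
open scoped ENNReal

/-- The Rademacher distribution on `ℝ`: `±1` with probability `1/2` each. -/
noncomputable def radem : Measure ℝ :=
  (1 / 2 : ℝ≥0∞) • Measure.dirac (1 : ℝ) + (1 / 2 : ℝ≥0∞) • Measure.dirac (-1 : ℝ)

namespace UPSym

instance : IsProbabilityMeasure radem := by
  constructor
  simp [radem, ENNReal.inv_two_add_inv_two]

lemma radem_ae : ∀ᵐ t ∂radem, t = 1 ∨ t = -1 := by
  rw [ae_iff]
  have hs : MeasurableSet {t : ℝ | ¬(t = 1 ∨ t = -1)} := by
    have : {t : ℝ | ¬(t = 1 ∨ t = -1)} = ({1, -1} : Set ℝ)ᶜ := by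
      ext t; simp [Set.mem_insert_iff]
    rw [this]
    exact ((measurableSet_singleton (-1 : ℝ)).insert 1).compl
  rw [radem, Measure.add_apply, Measure.smul_apply, Measure.smul_apply,
    Measure.dirac_apply' _ hs, Measure.dirac_apply' _ hs]
  simp [Set.indicator_apply]

lemma radem_one : radem ({1} : Set ℝ) = 1 / 2 := by
  rw [radem, Measure.add_apply, Measure.smul_apply, Measure.smul_apply,
    Measure.dirac_apply' _ (measurableSet_singleton _),
    Measure.dirac_apply' _ (measurableSet_singleton _)]
  norm_num [Set.indicator_apply]

lemma pi_radem_one_ne_zero (n : ℕ) :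
    (Measure.pi fun _ : Fin n => radem) {fun _ => (1 : ℝ)} ≠ 0 := by
  have h1 : ({fun _ => (1 : ℝ)} : Set (Fin n → ℝ)) = Set.pi Set.univ fun _ => ({1} : Set ℝ) := by
    ext e; simp [funext_iff, Set.mem_pi]
  rw [h1, Measure.pi_pi]
  simp only [radem_one, Finset.prod_const]
  exact pow_ne_zero _ (by norm_num)

lemma ae_pi_radem (n : ℕ) :
    ∀ᵐ e ∂(Measure.pi fun _ : Fin n => radem), ∀ i, e i = 1 ∨ e i = -1 :=
  ae_all_iff.mpr fun i =>
    (MeasureTheory.Measure.tendsto_eval_ae_ae (μ := fun _ : Fin n => radem) (i := i)).eventually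
      radem_ae

lemma holds_at_one {n : ℕ} {P : (Fin n → ℝ) → Prop}
    (h : ∀ᵐ e ∂(Measure.pi fun _ : Fin n => radem), P e) : P fun _ => 1 := by
  by_contra hc
  exact pi_radem_one_ne_zero n
    (measure_mono_null (Set.singleton_subset_iff.mpr hc) (ae_iff.mp h))

variable {𝒵 : Type*} [MeasurableSpace 𝒵]

lemma pi_map_eval (Pz : Measure 𝒵) [IsProbabilityMeasure Pz] (n : ℕ) (i : Fin n) :
    (Measure.pi fun _ : Fin n => Pz).map (fun y => y i) = Pz := by
  ext s hs
  rw [Measure.map_apply (measurable_pi_apply i) hs]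
  have h1 : (fun y : Fin n → 𝒵 => y i) ⁻¹' s =
      Set.pi Set.univ (Function.update (fun _ => Set.univ) i s) := by
    ext y
    simp only [Set.mem_preimage, Set.mem_pi, Set.mem_univ, forall_true_left,
      Function.update_apply]
    constructor
    · intro hy j
      by_cases hj : j = i
      · subst hj; simpa using hy
      · simp [hj]
    · intro hy; simpa using hy i
  rw [h1, Measure.pi_pi]
  simp [Function.update_apply, apply_ite Pz, measure_univ, Finset.prod_ite_eq']

lemma pi_map_pair (Pz : Measure 𝒵) [IsProbabilityMeasure Pz] (n : ℕ) {i j : Fin n}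
    (hij : i ≠ j) :
    (Measure.pi fun _ : Fin n => Pz).map (fun y => (y i, y j)) = Pz.prod Pz := by
  have hm : Measurable fun y : Fin n → 𝒵 => (y i, y j) :=
    (measurable_pi_apply i).prodMk (measurable_pi_apply j)
  refine (Measure.prod_eq fun s t hs ht => ?_).symm
  rw [Measure.map_apply hm (hs.prod ht)]
  have h1 : (fun y : Fin n → 𝒵 => (y i, y j)) ⁻¹' (s ×ˢ t) =
      Set.pi Set.univ (Function.update (Function.update (fun _ => Set.univ) i s) j t) := by
    ext y
    simp only [Set.mem_preimage, Set.mem_prod, Set.mem_pi, Set.mem_univ, forall_true_left,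
      Function.update_apply]
    constructor
    · rintro ⟨h1, h2⟩ k
      by_cases hk : k = j
      · subst hk; simp [h2]
      · by_cases hk' : k = i
        · subst hk'; simp [hk, h1]
        · simp [hk, hk']
    · intro hy
      have e1 := hy i
      have e2 := hy j
      simp [hij] at e1 e2
      exact ⟨e1, e2⟩
  rw [h1, Measure.pi_pi]
  have hprod : ∀ k : Fin n,
      Pz ((Function.update (Function.update (fun _ => Set.univ) i s) j t) k) =
      Function.update (Function.update (fun _ : Fin n => (1 : ℝ≥0∞)) i (Pz s)) j (Pz t) k := by
    intro k
    simp [Function.update_apply, apply_ite Pz, measure_univ]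
  rw [Finset.prod_congr rfl fun k _ => hprod k,
    Finset.prod_update_of_mem (Finset.mem_univ j),
    Finset.prod_update_of_mem (Finset.mem_sdiff.mpr ⟨Finset.mem_univ i, by simp [hij]⟩)]
  simp [mul_comm]

lemma integral_eval (Pz : Measure 𝒵) [IsProbabilityMeasure Pz] (n : ℕ) (i : Fin n)
    (f : 𝒵 → ℝ) (hf : Measurable f) :
    ∫ y, f (y i) ∂(Measure.pi fun _ : Fin n => Pz) = ∫ z, f z ∂Pz := by
  have h2 := integral_map (μ := Measure.pi fun _ : Fin n => Pz) (φ := fun y => y i)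
    (measurable_pi_apply i).aemeasurable (f := f)
    (by rw [pi_map_eval] ; exact hf.aestronglyMeasurable)
  rw [pi_map_eval] at h2
  exact h2.symm

lemma integral_pair (Pz : Measure 𝒵) [IsProbabilityMeasure Pz] (n : ℕ) {i j : Fin n}
    (hij : i ≠ j) (f : 𝒵 × 𝒵 → ℝ) (hf : Measurable f) :
    ∫ y, f (y i, y j) ∂(Measure.pi fun _ : Fin n => Pz) = ∫ p, f p ∂(Pz.prod Pz) := by
  have h2 := integral_map (μ := Measure.pi fun _ : Fin n => Pz) (φ := fun y => (y i, y j))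
    ((measurable_pi_apply i).prodMk (measurable_pi_apply j)).aemeasurable (f := f)
    (by rw [pi_map_pair Pz n hij] ; exact hf.aestronglyMeasurable)
  rw [pi_map_pair Pz n hij] at h2
  exact h2.symm

lemma integrable_bdd {α : Type*} [MeasurableSpace α] (μ : Measure α) [IsFiniteMeasure μ]
    {f : α → ℝ} (hf : AEStronglyMeasurable f μ) {C : ℝ} (h : ∀ a, |f a| ≤ C) :
    Integrable f μ :=
  Integrable.mono' (integrable_const C) hf
    (Filter.Eventually.of_forall fun a => by simpa [Real.norm_eq_abs] using h a)

end UPSym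

namespace UPSym

variable {𝒵 : Type*} [MeasurableSpace 𝒵]

noncomputable def Lterm (Pz : Measure 𝒵) (n : ℕ) (h : 𝒵 → 𝒵 → ℝ) (x : Fin n → 𝒵) : ℝ :=
  ((n : ℝ) * ((n : ℝ) - 1))⁻¹ * ∑ p ∈ Finset.univ.offDiag,
    (h (x p.1) (x p.2) - (∫ w, h (x p.1) w ∂Pz) - (∫ w, h (x p.2) w ∂Pz)
      + ∫ z, ∫ w, h z w ∂Pz ∂Pz)

noncomputable def Mterm (n : ℕ) (h : 𝒵 → 𝒵 → ℝ) (x y : Fin n → 𝒵) : ℝ :=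
  ((n : ℝ) * ((n : ℝ) - 1))⁻¹ * ∑ p ∈ Finset.univ.offDiag,
    (h (x p.1) (x p.2) - h (y p.1) (x p.2) - h (x p.1) (y p.2) + h (y p.1) (y p.2))

noncomputable def Rterm (n : ℕ) (h : 𝒵 → 𝒵 → ℝ) (x y : Fin n → 𝒵) (e : Fin n → ℝ) : ℝ :=
  ((n : ℝ) * ((n : ℝ) - 1))⁻¹ * ∑ p ∈ Finset.univ.offDiag, e p.1 * e p.2 *
    (h (x p.1) (x p.2) - h (y p.1) (x p.2) - h (x p.1) (y p.2) + h (y p.1) (y p.2))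

noncomputable def Fsup (Pz : Measure 𝒵) (n : ℕ) (H : Set (𝒵 → 𝒵 → ℝ)) (x : Fin n → 𝒵) : ℝ :=
  sSup {v : ℝ | ∃ h ∈ H, v = Lterm Pz n h x}

noncomputable def Msup (n : ℕ) (H : Set (𝒵 → 𝒵 → ℝ)) (q : (Fin n → 𝒵) × (Fin n → 𝒵)) : ℝ :=
  sSup {v : ℝ | ∃ h ∈ H, v = Mterm n h q.1 q.2}

noncomputable def Rsup (n : ℕ) (H : Set (𝒵 → 𝒵 → ℝ)) (x y : Fin n → 𝒵) (e : Fin n → ℝ) : ℝ :=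
  sSup {v : ℝ | ∃ h ∈ H, v = Rterm n h x y e}

noncomputable def swapFun (n : ℕ) (e : Fin n → ℝ) (q : (Fin n → 𝒵) × (Fin n → 𝒵)) :
    (Fin n → 𝒵) × (Fin n → 𝒵) :=
  (fun i => if e i = 1 then q.1 i else q.2 i, fun i => if e i = 1 then q.2 i else q.1 i)

lemma swapFun_involutive (n : ℕ) (e : Fin n → ℝ) :
    Function.Involutive (swapFun (𝒵 := 𝒵) n e) := by
  intro q
  unfold swapFun
  refine Prod.ext ?_ ?_ <;> funext i <;> by_cases h : e i = 1 <;> simp [h]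

lemma measurable_swapFun (n : ℕ) (e : Fin n → ℝ) :
    Measurable (swapFun (𝒵 := 𝒵) n e) := by
  unfold swapFun
  refine Measurable.prodMk (measurable_pi_lambda _ fun i => ?_)
    (measurable_pi_lambda _ fun i => ?_) <;> by_cases h : e i = 1
  · simp only [if_pos h]; exact (measurable_pi_apply i).comp measurable_fst
  · simp only [if_neg h]; exact (measurable_pi_apply i).comp measurable_snd
  · simp only [if_pos h]; exact (measurable_pi_apply i).comp measurable_snd
  · simp only [if_neg h]; exact (measurable_pi_apply i).comp measurable_fst

noncomputable def swapEquiv (n : ℕ) (e : Fin n → ℝ) :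
    ((Fin n → 𝒵) × (Fin n → 𝒵)) ≃ᵐ ((Fin n → 𝒵) × (Fin n → 𝒵)) where
  toFun := swapFun n e
  invFun := swapFun n e
  left_inv := swapFun_involutive n e
  right_inv := swapFun_involutive n e
  measurable_toFun := measurable_swapFun n e
  measurable_invFun := measurable_swapFun n e

lemma measurePreserving_swapFun (Pz : Measure 𝒵) [IsProbabilityMeasure Pz] (n : ℕ)
    (e : Fin n → ℝ) :
    MeasurePreserving (swapFun (𝒵 := 𝒵) n e)
      ((Measure.pi fun _ : Fin n => Pz).prod (Measure.pi fun _ : Fin n => Pz))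
      ((Measure.pi fun _ : Fin n => Pz).prod (Measure.pi fun _ : Fin n => Pz)) := by
  classical
  have hPhi := measurePreserving_arrowProdEquivProdArrow 𝒵 𝒵 (Fin n)
    (fun _ => Pz) (fun _ => Pz)
  have hF : MeasurePreserving
      (fun (a : Fin n → 𝒵 × 𝒵) i => if e i = 1 then a i else (a i).swap)
      (Measure.pi fun _ : Fin n => Pz.prod Pz) (Measure.pi fun _ : Fin n => Pz.prod Pz) := by
    refine measurePreserving_pi (fun _ : Fin n => Pz.prod Pz) (fun _ : Fin n => Pz.prod Pz)
      (f := fun i p => if e i = 1 then p else p.swap) fun i => ?_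
    by_cases h : e i = 1
    · simp only [if_pos h]; exact MeasurePreserving.id _
    · simp only [if_neg h]; exact Measure.measurePreserving_swap
  have hkey : swapFun (𝒵 := 𝒵) n e =
      (MeasurableEquiv.arrowProdEquivProdArrow 𝒵 𝒵 (Fin n)) ∘
        (fun (a : Fin n → 𝒵 × 𝒵) i => if e i = 1 then a i else (a i).swap) ∘
          (MeasurableEquiv.arrowProdEquivProdArrow 𝒵 𝒵 (Fin n)).symm := by
    funext q
    refine Prod.ext ?_ ?_ <;> funext i <;> by_cases h : e i = 1 <;>
      simp [swapFun, MeasurableEquiv.arrowProdEquivProdArrow, Equiv.arrowProdEquivProdArrow,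
        h, Prod.swap]
  rw [hkey]
  exact hPhi.comp (hF.comp (MeasurePreserving.symm _ hPhi))

end UPSym

namespace UPSym

variable {𝒵 : Type*} [MeasurableSpace 𝒵]

lemma Mterm_le (n : ℕ) {h : 𝒵 → 𝒵 → ℝ} {b : ℝ} (hb : ∀ z w, |h z w| ≤ b)
    (x y : Fin n → 𝒵) :
    |Mterm n h x y| ≤ |((n : ℝ) * ((n : ℝ) - 1))⁻¹| *
      ((Finset.univ.offDiag : Finset (Fin n × Fin n)).card * (4 * |b|)) := by
  rw [Mterm, abs_mul]
  refine mul_le_mul_of_nonneg_left ?_ (abs_nonneg _)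
  refine (Finset.abs_sum_le_sum_abs _ _).trans ?_
  have hterm : ∀ p ∈ (Finset.univ.offDiag : Finset (Fin n × Fin n)),
      |h (x p.1) (x p.2) - h (y p.1) (x p.2) - h (x p.1) (y p.2) + h (y p.1) (y p.2)|
        ≤ 4 * |b| := by
    intro p _
    have h1 := abs_le.mp ((hb (x p.1) (x p.2)).trans (le_abs_self b))
    have h2 := abs_le.mp ((hb (y p.1) (x p.2)).trans (le_abs_self b))
    have h3 := abs_le.mp ((hb (x p.1) (y p.2)).trans (le_abs_self b))
    have h4 := abs_le.mp ((hb (y p.1) (y p.2)).trans (le_abs_self b))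
    rw [abs_le]
    constructor <;> [linarith [h1.1, h2.2, h3.2, h4.1]; linarith [h1.2, h2.1, h3.1, h4.2]]
  refine (Finset.sum_le_sum hterm).trans ?_
  rw [Finset.sum_const, nsmul_eq_mul]

lemma bddAbove_Mset (n : ℕ) (H : Set (𝒵 → 𝒵 → ℝ)) {b : ℝ}
    (hbound : ∀ h ∈ H, ∀ z w, |h z w| ≤ b) (x y : Fin n → 𝒵) :
    BddAbove {v : ℝ | ∃ h ∈ H, v = Mterm n h x y} := by
  refine ⟨|((n : ℝ) * ((n : ℝ) - 1))⁻¹| *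
      ((Finset.univ.offDiag : Finset (Fin n × Fin n)).card * (4 * |b|)), ?_⟩
  rintro v ⟨h, hH, rfl⟩
  exact (le_abs_self _).trans (Mterm_le n (hbound h hH) x y)

lemma Rsup_one (n : ℕ) (H : Set (𝒵 → 𝒵 → ℝ)) (x y : Fin n → 𝒵) :
    Rsup n H x y (fun _ => 1) = Msup n H (x, y) := by
  unfold Rsup Msup
  congr 1
  ext v
  simp only [Set.mem_setOf_eq]
  constructor <;> rintro ⟨h, hH, rfl⟩ <;>
    exact ⟨h, hH, by simp [Rterm, Mterm]⟩

lemma Rsup_pm (n : ℕ) (H : Set (𝒵 → 𝒵 → ℝ)) (x y : Fin n → 𝒵) (e : Fin n → ℝ)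
    (he : ∀ i, e i = 1 ∨ e i = -1) :
    Rsup n H x y e = Msup n H (swapFun n e (x, y)) := by
  have hterm : ∀ h : 𝒵 → 𝒵 → ℝ,
      Rterm n h x y e = Mterm n h (swapFun n e (x, y)).1 (swapFun n e (x, y)).2 := by
    intro h
    unfold Rterm Mterm swapFun
    congr 1
    refine Finset.sum_congr rfl fun p _ => ?_
    rcases he p.1 with h1 | h1 <;> rcases he p.2 with h2 | h2 <;>
      norm_num [h1, h2] <;> ring
  unfold Rsup Msup
  congr 1
  ext v
  simp only [Set.mem_setOf_eq]
  constructor <;> rintro ⟨h, hH, rfl⟩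
  · exact ⟨h, hH, hterm h⟩
  · exact ⟨h, hH, (hterm h).symm⟩

variable (Pz : Measure 𝒵) [IsProbabilityMeasure Pz]

lemma integrable_coord1 (n : ℕ) {h : 𝒵 → 𝒵 → ℝ} (hm : Measurable (Function.uncurry h))
    {b : ℝ} (hb : ∀ z w, |h z w| ≤ b) (i : Fin n) (z : 𝒵) :
    Integrable (fun y : Fin n → 𝒵 => h (y i) z) (Measure.pi fun _ : Fin n => Pz) := by
  have hmm : Measurable fun y : Fin n → 𝒵 => h (y i) z := by
    exact hm.comp (show Measurable fun y : Fin n → 𝒵 => (y i, z) from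
      (measurable_pi_apply i).prodMk measurable_const)
  exact integrable_bdd _ hmm.aestronglyMeasurable (fun y => hb (y i) z)

lemma integrable_coord2 (n : ℕ) {h : 𝒵 → 𝒵 → ℝ} (hm : Measurable (Function.uncurry h))
    {b : ℝ} (hb : ∀ z w, |h z w| ≤ b) (z : 𝒵) (j : Fin n) :
    Integrable (fun y : Fin n → 𝒵 => h z (y j)) (Measure.pi fun _ : Fin n => Pz) := by
  have hmm : Measurable fun y : Fin n → 𝒵 => h z (y j) := by
    exact hm.comp (show Measurable fun y : Fin n → 𝒵 => (z, y j) from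
      measurable_const.prodMk (measurable_pi_apply j))
  exact integrable_bdd _ hmm.aestronglyMeasurable (fun y => hb z (y j))

lemma integrable_coord12 (n : ℕ) {h : 𝒵 → 𝒵 → ℝ} (hm : Measurable (Function.uncurry h))
    {b : ℝ} (hb : ∀ z w, |h z w| ≤ b) (i j : Fin n) :
    Integrable (fun y : Fin n → 𝒵 => h (y i) (y j)) (Measure.pi fun _ : Fin n => Pz) := by
  have hmm : Measurable fun y : Fin n → 𝒵 => h (y i) (y j) := by
    exact hm.comp (show Measurable fun y : Fin n → 𝒵 => (y i, y j) from
      (measurable_pi_apply i).prodMk (measurable_pi_apply j))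
  exact integrable_bdd _ hmm.aestronglyMeasurable (fun y => hb (y i) (y j))

lemma integrable_Mterm (n : ℕ) {h : 𝒵 → 𝒵 → ℝ} (hm : Measurable (Function.uncurry h))
    {b : ℝ} (hb : ∀ z w, |h z w| ≤ b) (x : Fin n → 𝒵) :
    Integrable (fun y => Mterm n h x y) (Measure.pi fun _ : Fin n => Pz) := by
  unfold Mterm
  apply Integrable.const_mul
  apply integrable_finset_sum
  intro p _
  exact (((integrable_const _).sub (integrable_coord1 Pz n hm hb p.1 (x p.2))).sub
    (integrable_coord2 Pz n hm hb (x p.1) p.2)).add (integrable_coord12 Pz n hm hb p.1 p.2)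

lemma Lterm_eq (n : ℕ) {h : 𝒵 → 𝒵 → ℝ} (hm : Measurable (Function.uncurry h))
    (hs : ∀ z w, h z w = h w z) {b : ℝ} (hb : ∀ z w, |h z w| ≤ b) (x : Fin n → 𝒵) :
    Lterm Pz n h x = ∫ y, Mterm n h x y ∂(Measure.pi fun _ : Fin n => Pz) := by
  unfold Mterm
  rw [MeasureTheory.integral_const_mul]
  rw [integral_finset_sum _ (fun p _ =>
    (((integrable_const _).sub (integrable_coord1 Pz n hm hb p.1 (x p.2))).sub
      (integrable_coord2 Pz n hm hb (x p.1) p.2)).add (integrable_coord12 Pz n hm hb p.1 p.2))]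
  unfold Lterm
  congr 1
  refine Finset.sum_congr rfl fun p hp => ?_
  have hij : p.1 ≠ p.2 := (Finset.mem_offDiag.mp hp).2.2
  have Ic : Integrable (fun _ : Fin n → 𝒵 => h (x p.1) (x p.2))
      (Measure.pi fun _ : Fin n => Pz) := integrable_const _
  have I2 : Integrable (fun a : Fin n → 𝒵 => h (a p.1) (x p.2))
      (Measure.pi fun _ : Fin n => Pz) := integrable_coord1 Pz n hm hb p.1 (x p.2)
  have I3 : Integrable (fun a : Fin n → 𝒵 => h (x p.1) (a p.2))
      (Measure.pi fun _ : Fin n => Pz) := integrable_coord2 Pz n hm hb (x p.1) p.2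
  have I4 : Integrable (fun a : Fin n → 𝒵 => h (a p.1) (a p.2))
      (Measure.pi fun _ : Fin n => Pz) := integrable_coord12 Pz n hm hb p.1 p.2
  have I23 : Integrable (fun a : Fin n → 𝒵 => h (x p.1) (x p.2) - h (a p.1) (x p.2))
      (Measure.pi fun _ : Fin n => Pz) := Ic.sub I2
  have I234 : Integrable
      (fun a : Fin n → 𝒵 => h (x p.1) (x p.2) - h (a p.1) (x p.2) - h (x p.1) (a p.2))
      (Measure.pi fun _ : Fin n => Pz) := I23.sub I3
  rw [integral_add I234 I4, integral_sub I23 I3, integral_sub Ic I2, integral_const]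
  have e2 : ∫ y, h (y p.1) (x p.2) ∂(Measure.pi fun _ : Fin n => Pz)
      = ∫ w, h (x p.2) w ∂Pz := by
    rw [integral_eval Pz n p.1 (fun z => h z (x p.2))
      (by exact hm.comp (show Measurable fun z : 𝒵 => (z, x p.2) from
        measurable_id.prodMk measurable_const))]
    exact integral_congr_ae (Filter.Eventually.of_forall fun z => hs z (x p.2))
  have e3 : ∫ y, h (x p.1) (y p.2) ∂(Measure.pi fun _ : Fin n => Pz)
      = ∫ w, h (x p.1) w ∂Pz :=
    integral_eval Pz n p.2 (fun w => h (x p.1) w)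
      (by exact hm.comp (show Measurable fun w : 𝒵 => (x p.1, w) from
        measurable_const.prodMk measurable_id))
  have e4 : ∫ y, h (y p.1) (y p.2) ∂(Measure.pi fun _ : Fin n => Pz)
      = ∫ z, ∫ w, h z w ∂Pz ∂Pz := by
    have h5 : ∫ y, h (y p.1) (y p.2) ∂(Measure.pi fun _ : Fin n => Pz)
        = ∫ q, Function.uncurry h q ∂(Pz.prod Pz) :=
      integral_pair Pz n hij (Function.uncurry h) hm
    rw [h5]
    exact integral_prod _ (integrable_bdd _ hm.aestronglyMeasurable fun q => hb q.1 q.2)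
  rw [e2, e3, e4]
  simp only [probReal_univ, one_smul]
  ring

end UPSym

namespace UPSym

theorem main {𝒵 : Type*} [MeasurableSpace 𝒵] (Pz : Measure 𝒵) [IsProbabilityMeasure Pz]
    (n : ℕ) (b : ℝ) (H : Set (𝒵 → 𝒵 → ℝ)) (hHne : H.Nonempty)
    (hmeas : ∀ h ∈ H, Measurable (Function.uncurry h))
    (hsymm : ∀ h ∈ H, ∀ z w, h z w = h w z)
    (hbound : ∀ h ∈ H, ∀ z w, |h z w| ≤ b)
    (hintL : Integrable (fun ω : (Fin n → 𝒵) × ((Fin n → 𝒵) × (Fin n → ℝ)) =>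
        Fsup Pz n H ω.1)
      ((Measure.pi fun _ : Fin n => Pz).prod
        ((Measure.pi fun _ : Fin n => Pz).prod (Measure.pi fun _ : Fin n => radem))))
    (hintR : Integrable (fun ω : (Fin n → 𝒵) × ((Fin n → 𝒵) × (Fin n → ℝ)) =>
        Rsup n H ω.1 ω.2.1 ω.2.2)
      ((Measure.pi fun _ : Fin n => Pz).prod
        ((Measure.pi fun _ : Fin n => Pz).prod (Measure.pi fun _ : Fin n => radem)))) :
    (∫ ω : (Fin n → 𝒵) × ((Fin n → 𝒵) × (Fin n → ℝ)), Fsup Pz n H ω.1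
      ∂((Measure.pi fun _ : Fin n => Pz).prod
        ((Measure.pi fun _ : Fin n => Pz).prod (Measure.pi fun _ : Fin n => radem))))
    ≤ ∫ ω : (Fin n → 𝒵) × ((Fin n → 𝒵) × (Fin n → ℝ)), Rsup n H ω.1 ω.2.1 ω.2.2
      ∂((Measure.pi fun _ : Fin n => Pz).prod
        ((Measure.pi fun _ : Fin n => Pz).prod (Measure.pi fun _ : Fin n => radem))) := by
  have hassoc := measurePreserving_prodAssoc (Measure.pi fun _ : Fin n => Pz)
    (Measure.pi fun _ : Fin n => Pz) (Measure.pi fun _ : Fin n => radem)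
  -- transported integrability of the RHS integrand
  have hR' : Integrable (fun q : ((Fin n → 𝒵) × (Fin n → 𝒵)) × (Fin n → ℝ) =>
      Rsup n H q.1.1 q.1.2 q.2)
      (((Measure.pi fun _ : Fin n => Pz).prod (Measure.pi fun _ : Fin n => Pz)).prod
        (Measure.pi fun _ : Fin n => radem)) :=
    (hassoc.integrable_comp_emb MeasurableEquiv.prodAssoc.measurableEmbedding).mpr hintR
  -- integrability of the middle supremum
  have hMint : Integrable (Msup n H)
      ((Measure.pi fun _ : Fin n => Pz).prod (Measure.pi fun _ : Fin n => Pz)) := by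
    have h2 : ∀ᵐ e ∂(Measure.pi fun _ : Fin n => radem),
        Integrable (fun q : (Fin n → 𝒵) × (Fin n → 𝒵) => Rsup n H q.1 q.2 e)
          ((Measure.pi fun _ : Fin n => Pz).prod (Measure.pi fun _ : Fin n => Pz)) := by
      filter_upwards [hR'.swap.prod_right_ae] with e he
      exact he
    have h3 := holds_at_one h2
    have h4 : (fun q : (Fin n → 𝒵) × (Fin n → 𝒵) => Rsup n H q.1 q.2 fun _ => 1)
        = Msup n H := by
      funext q; rw [Rsup_one]
    rwa [h4] at h3
  -- integrability of the LHS supremum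
  have hFint : Integrable (Fsup Pz n H) (Measure.pi fun _ : Fin n => Pz) := by
    haveI : (ae ((Measure.pi fun _ : Fin n => Pz).prod
        (Measure.pi fun _ : Fin n => radem))).NeBot :=
      ae_neBot.mpr (IsProbabilityMeasure.ne_zero _)
    obtain ⟨w, hw⟩ := hintL.swap.prod_right_ae.exists
    exact hw
  -- the left-hand side
  have hLHS : (∫ ω : (Fin n → 𝒵) × ((Fin n → 𝒵) × (Fin n → ℝ)), Fsup Pz n H ω.1
      ∂((Measure.pi fun _ : Fin n => Pz).prod
        ((Measure.pi fun _ : Fin n => Pz).prod (Measure.pi fun _ : Fin n => radem))))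
      = ∫ x, Fsup Pz n H x ∂(Measure.pi fun _ : Fin n => Pz) := by
    rw [integral_prod _ hintL]
    simp [measure_univ]
  -- the right-hand side
  have hRHS : (∫ ω : (Fin n → 𝒵) × ((Fin n → 𝒵) × (Fin n → ℝ)), Rsup n H ω.1 ω.2.1 ω.2.2
      ∂((Measure.pi fun _ : Fin n => Pz).prod
        ((Measure.pi fun _ : Fin n => Pz).prod (Measure.pi fun _ : Fin n => radem))))
      = ∫ q, Msup n H q
          ∂((Measure.pi fun _ : Fin n => Pz).prod (Measure.pi fun _ : Fin n => Pz)) := by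
    calc (∫ ω : (Fin n → 𝒵) × ((Fin n → 𝒵) × (Fin n → ℝ)), Rsup n H ω.1 ω.2.1 ω.2.2
        ∂((Measure.pi fun _ : Fin n => Pz).prod
          ((Measure.pi fun _ : Fin n => Pz).prod (Measure.pi fun _ : Fin n => radem))))
        = ∫ q : ((Fin n → 𝒵) × (Fin n → 𝒵)) × (Fin n → ℝ), Rsup n H q.1.1 q.1.2 q.2
            ∂(((Measure.pi fun _ : Fin n => Pz).prod (Measure.pi fun _ : Fin n => Pz)).prod
              (Measure.pi fun _ : Fin n => radem)) :=
          (hassoc.integral_comp'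
            (fun ω : (Fin n → 𝒵) × ((Fin n → 𝒵) × (Fin n → ℝ)) =>
              Rsup n H ω.1 ω.2.1 ω.2.2)).symm
      _ = ∫ e, ∫ q : (Fin n → 𝒵) × (Fin n → 𝒵), Rsup n H q.1 q.2 e
            ∂((Measure.pi fun _ : Fin n => Pz).prod (Measure.pi fun _ : Fin n => Pz))
            ∂(Measure.pi fun _ : Fin n => radem) := integral_prod_symm _ hR'
      _ = ∫ _e, ∫ q, Msup n H q
            ∂((Measure.pi fun _ : Fin n => Pz).prod (Measure.pi fun _ : Fin n => Pz))
            ∂(Measure.pi fun _ : Fin n => radem) := by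
          refine integral_congr_ae ?_
          filter_upwards [ae_pi_radem n] with e he
          have hstep1 : ∫ q : (Fin n → 𝒵) × (Fin n → 𝒵), Rsup n H q.1 q.2 e
              ∂((Measure.pi fun _ : Fin n => Pz).prod (Measure.pi fun _ : Fin n => Pz))
              = ∫ q, Msup n H (swapFun n e q)
                ∂((Measure.pi fun _ : Fin n => Pz).prod (Measure.pi fun _ : Fin n => Pz)) := by
            refine integral_congr_ae (Filter.Eventually.of_forall fun q => ?_)
            exact Rsup_pm n H q.1 q.2 e he
          rw [hstep1]
          have hmp : MeasurePreserving (⇑(swapEquiv (𝒵 := 𝒵) n e))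
              ((Measure.pi fun _ : Fin n => Pz).prod (Measure.pi fun _ : Fin n => Pz))
              ((Measure.pi fun _ : Fin n => Pz).prod (Measure.pi fun _ : Fin n => Pz)) :=
            measurePreserving_swapFun Pz n e
          exact hmp.integral_comp' (Msup n H)
      _ = ∫ q, Msup n H q
            ∂((Measure.pi fun _ : Fin n => Pz).prod (Measure.pi fun _ : Fin n => Pz)) := by
          simp [measure_univ]
  -- Jensen step
  have hJ : (∫ x, Fsup Pz n H x ∂(Measure.pi fun _ : Fin n => Pz))
      ≤ ∫ q, Msup n H q
          ∂((Measure.pi fun _ : Fin n => Pz).prod (Measure.pi fun _ : Fin n => Pz)) := by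
    have hmono : ∀ᵐ x ∂(Measure.pi fun _ : Fin n => Pz),
        Fsup Pz n H x ≤ ∫ y, Msup n H (x, y) ∂(Measure.pi fun _ : Fin n => Pz) := by
      filter_upwards [hMint.prod_right_ae] with x hx
      obtain ⟨h₀, hh₀⟩ := hHne
      refine csSup_le ⟨Lterm Pz n h₀ x, h₀, hh₀, rfl⟩ ?_
      rintro v ⟨h, hH, rfl⟩
      rw [Lterm_eq Pz n (hmeas h hH) (hsymm h hH) (hbound h hH) x]
      refine integral_mono (integrable_Mterm Pz n (hmeas h hH) (hbound h hH) x) hx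
        fun y => ?_
      exact le_csSup (bddAbove_Mset n H hbound x y) ⟨h, hH, rfl⟩
    calc (∫ x, Fsup Pz n H x ∂(Measure.pi fun _ : Fin n => Pz))
        ≤ ∫ x, ∫ y, Msup n H (x, y) ∂(Measure.pi fun _ : Fin n => Pz)
            ∂(Measure.pi fun _ : Fin n => Pz) :=
          integral_mono_ae hFint hMint.integral_prod_left hmono
      _ = ∫ q, Msup n H q
            ∂((Measure.pi fun _ : Fin n => Pz).prod (Measure.pi fun _ : Fin n => Pz)) :=
          integral_integral hMint
  rw [hLHS, hRHS]
  exact hJ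

end UPSym

/-- Degenerate U-process symmetrization.
For a class `H` of symmetric bounded measurable functions on `𝒵²`, i.i.d. `Z₁,…,Zₙ ∼ Pz` with
an independent copy `Z′₁,…,Z′ₙ` and an independent Rademacher sequence `ε` (realized on the
canonical product space),
`E sup_{h∈H} (n(n−1))⁻¹ Σ_{i≠j} [h(Zᵢ,Zⱼ) − h̃(Zᵢ) − h̃(Zⱼ) + E h]`
`≤ E sup_{h∈H} (n(n−1))⁻¹ Σ_{i≠j} εᵢ εⱼ [h(Zᵢ,Zⱼ) − h(Z′ᵢ,Zⱼ) − h(Zᵢ,Z′ⱼ) + h(Z′ᵢ,Z′ⱼ)]`,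
where `h̃(z) = E h(z, Z)`. -/
theorem degenerate_uprocess_symmetrization
    {𝒵 : Type*} [MeasurableSpace 𝒵] (Pz : Measure 𝒵) [IsProbabilityMeasure Pz]
    (n : ℕ) (hn : 2 ≤ n) (b : ℝ)
    (H : Set (𝒵 → 𝒵 → ℝ)) (hHne : H.Nonempty)
    (hmeas : ∀ h ∈ H, Measurable (Function.uncurry h))
    (hsymm : ∀ h ∈ H, ∀ z w, h z w = h w z)
    (hbound : ∀ h ∈ H, ∀ z w, |h z w| ≤ b)
    -- both suprema are integrable on the canonical product space
    (hintL : Integrable (fun ω : (Fin n → 𝒵) × ((Fin n → 𝒵) × (Fin n → ℝ)) =>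
        sSup {v : ℝ | ∃ h ∈ H, v = ((n : ℝ) * ((n : ℝ) - 1))⁻¹ *
          ∑ p ∈ Finset.univ.offDiag,
            (h (ω.1 p.1) (ω.1 p.2) - (∫ w, h (ω.1 p.1) w ∂Pz) - (∫ w, h (ω.1 p.2) w ∂Pz)
              + ∫ z, ∫ w, h z w ∂Pz ∂Pz)})
      ((Measure.pi fun _ : Fin n => Pz).prod
        ((Measure.pi fun _ : Fin n => Pz).prod (Measure.pi fun _ : Fin n => radem))))
    (hintR : Integrable (fun ω : (Fin n → 𝒵) × ((Fin n → 𝒵) × (Fin n → ℝ)) =>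
        sSup {v : ℝ | ∃ h ∈ H, v = ((n : ℝ) * ((n : ℝ) - 1))⁻¹ *
          ∑ p ∈ Finset.univ.offDiag, ω.2.2 p.1 * ω.2.2 p.2 *
            (h (ω.1 p.1) (ω.1 p.2) - h (ω.2.1 p.1) (ω.1 p.2) - h (ω.1 p.1) (ω.2.1 p.2)
              + h (ω.2.1 p.1) (ω.2.1 p.2))})
      ((Measure.pi fun _ : Fin n => Pz).prod
        ((Measure.pi fun _ : Fin n => Pz).prod (Measure.pi fun _ : Fin n => radem)))) :
    (∫ ω : (Fin n → 𝒵) × ((Fin n → 𝒵) × (Fin n → ℝ)),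
        sSup {v : ℝ | ∃ h ∈ H, v = ((n : ℝ) * ((n : ℝ) - 1))⁻¹ *
          ∑ p ∈ Finset.univ.offDiag,
            (h (ω.1 p.1) (ω.1 p.2) - (∫ w, h (ω.1 p.1) w ∂Pz) - (∫ w, h (ω.1 p.2) w ∂Pz)
              + ∫ z, ∫ w, h z w ∂Pz ∂Pz)}
      ∂((Measure.pi fun _ : Fin n => Pz).prod
        ((Measure.pi fun _ : Fin n => Pz).prod (Measure.pi fun _ : Fin n => radem))))
    ≤ ∫ ω : (Fin n → 𝒵) × ((Fin n → 𝒵) × (Fin n → ℝ)),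
        sSup {v : ℝ | ∃ h ∈ H, v = ((n : ℝ) * ((n : ℝ) - 1))⁻¹ *
          ∑ p ∈ Finset.univ.offDiag, ω.2.2 p.1 * ω.2.2 p.2 *
            (h (ω.1 p.1) (ω.1 p.2) - h (ω.2.1 p.1) (ω.1 p.2) - h (ω.1 p.1) (ω.2.1 p.2)
              + h (ω.2.1 p.1) (ω.2.1 p.2))}
      ∂((Measure.pi fun _ : Fin n => Pz).prod
        ((Measure.pi fun _ : Fin n => Pz).prod (Measure.pi fun _ : Fin n => radem))) := by
  exact UPSym.main Pz n b H hHne hmeas hsymm hbound hintL hintR
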